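/- R is a semilocal ring with exactly two maximal ideals: an ideal m of R is maximal if and only if m = Ideal.span {u} or m = Ideal.span {1 + u}. -/

import Mathlib

open Polynomial

noncomputable section

/-- The ring `R = F₂ + uF₂ + u²F₂` with `u³ = u`, realized as `(ZMod 2)[X] ⧸ ⟨X³ - X⟩`. -/
abbrev R : Type := Polynomial (ZMod 2) ⧸ Ideal.span ({X ^ 3 - X} : Set (Polynomial (ZMod 2)))

/-- `u` is the residue class of `X` in `R`. -/
def u : R := Ideal.Quotient.mk _ (X : Polynomial (ZMod 2))

lemma span_XsubC_max (a : ZMod 2) :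
    (Ideal.span ({X - C a} : Set (Polynomial (ZMod 2)))).IsMaximal := by
  rw [← Polynomial.ker_evalRingHom]
  exact RingHom.ker_isMaximal_of_surjective _ fun z => ⟨C z, eval_C⟩

lemma map_max (a : ZMod 2)
    (h : (X : Polynomial (ZMod 2)) ^ 3 - X ∈ Ideal.span ({X - C a} : Set (Polynomial (ZMod 2)))) :
    (Ideal.map (Ideal.Quotient.mk _)
      (Ideal.span ({X - C a} : Set (Polynomial (ZMod 2)))) : Ideal R).IsMaximal := by
  have hs : Function.Surjective
      (Ideal.Quotient.mk (Ideal.span ({X ^ 3 - X} : Set (Polynomial (ZMod 2))))) :=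
    Ideal.Quotient.mk_surjective
  rcases Ideal.map_eq_top_or_isMaximal_of_surjective _ hs (span_XsubC_max a) with htop | hmax
  · exfalso
    have hc := Ideal.comap_map_of_surjective _ hs
      (Ideal.span ({X - C a} : Set (Polynomial (ZMod 2))))
    rw [htop, Ideal.comap_top, ← RingHom.ker_eq_comap_bot, Ideal.mk_ker] at hc
    have hle : Ideal.span ({X ^ 3 - X} : Set (Polynomial (ZMod 2))) ≤ Ideal.span {X - C a} := by
      rw [Ideal.span_le]; simpa using h
    rw [sup_eq_left.mpr hle] at hc
    exact (span_XsubC_max a).ne_top hc.symm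
  · exact hmax

lemma h2R : (2 : R) = 0 := by
  have h : ((2 : ℕ) : R) = 0 := by
    rw [← map_natCast (Ideal.Quotient.mk (Ideal.span ({X ^ 3 - X} : Set (Polynomial (ZMod 2))))) 2]
    have : ((2 : ℕ) : Polynomial (ZMod 2)) = 0 := by
      rw [← Polynomial.C_eq_natCast, show ((2 : ℕ) : ZMod 2) = 0 by decide, map_zero]
    rw [this, map_zero]
  exact_mod_cast h

lemma hmem (a : ZMod 2) :
    (X : Polynomial (ZMod 2)) ^ 3 - X ∈ Ideal.span ({X - C a} : Set (Polynomial (ZMod 2))) := by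
  rw [Ideal.mem_span_singleton]
  refine Polynomial.dvd_iff_isRoot.mpr ?_
  simp only [IsRoot, eval_sub, eval_pow, eval_X]
  revert a; decide

lemma spanu_max : (Ideal.span ({u} : Set R)).IsMaximal := by
  have : Ideal.span ({u} : Set R) =
      Ideal.map (Ideal.Quotient.mk _) (Ideal.span ({X - C 0} : Set (Polynomial (ZMod 2)))) := by
    rw [Ideal.map_span]; simp [u]
  rw [this]; exact map_max 0 (hmem 0)

lemma one_add_u_eq : (1 : R) + u =
    (Ideal.Quotient.mk (Ideal.span ({X ^ 3 - X} : Set (Polynomial (ZMod 2))))) (X - C 1) := by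
  have : (Ideal.Quotient.mk (Ideal.span ({X ^ 3 - X} : Set (Polynomial (ZMod 2))))) (X - C 1)
      = u - 1 := by simp [u]
  rw [this]; linear_combination h2R

lemma spanv_max : (Ideal.span ({1 + u} : Set R)).IsMaximal := by
  have : Ideal.span ({1 + u} : Set R) =
      Ideal.map (Ideal.Quotient.mk _) (Ideal.span ({X - C 1} : Set (Polynomial (ZMod 2)))) := by
    rw [Ideal.map_span, Set.image_singleton, one_add_u_eq]
  rw [this]; exact map_max 1 (hmem 1)

lemma key : u * (1 + u) ^ 2 = 0 := by
  have h3 : u ^ 3 - u = 0 := by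
    rw [show u ^ 3 - u = (Ideal.Quotient.mk _) ((X : Polynomial (ZMod 2)) ^ 3 - X) by
      simp only [map_sub, map_pow]; rfl]
    exact Ideal.Quotient.eq_zero_iff_mem.mpr (Ideal.subset_span rfl)
  linear_combination h3 + (u ^ 2 + u) * h2R

/-- `R` is a semilocal ring with exactly two maximal ideals: an ideal `m` of `R` is maximal
if and only if `m = ⟨u⟩` or `m = ⟨1 + u⟩`. -/
theorem isMaximal_iff (m : Ideal R) :
    m.IsMaximal ↔ m = Ideal.span ({u} : Set R) ∨ m = Ideal.span ({1 + u} : Set R) := by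
  constructor
  · intro hm
    have hp : m.IsPrime := hm.isPrime
    have h0 : u * (1 + u) ^ 2 ∈ m := by rw [key]; exact m.zero_mem
    rcases hp.mem_or_mem h0 with h | h
    · left
      exact ((spanu_max.eq_of_le hm.ne_top (by rwa [Ideal.span_singleton_le_iff_mem]))).symm
    · right
      have : (1 + u) ∈ m := by
        rcases hp.mem_or_mem (by rwa [sq] at h) with h' | h' <;> exact h'
      exact ((spanv_max.eq_of_le hm.ne_top (by rwa [Ideal.span_singleton_le_iff_mem]))).symm
  · rintro (rfl | rfl)
    · exact spanu_max
    · exact spanv_max
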